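/- arXiv:1902.02705 — 2 statements merged into one kernel-verified Lean document; each statement's English description precedes it below -/
import Mathlib

section
/- Let C be a permutation class and let π ∈ C|Av(21) be a permutation of length n ≥ 1. Then there exists a unique index i with 0 ≤ i ≤ n−1 such that: (a) the pattern of π on positions [0,i) lies in C ∪ {ε}; (b) the suffix is increasing, i.e. π(i) < π(i+1) < ⋯ < π(n−1); and (c) either i = 0 or π(i) < π(i−1). (This is the 'greedy gridding' of π, in which the increasing suffix is taken as long as possible.) -/
/-- A permutation of arbitrary length: a length `n` together with a bijection of `Fin n`. -/
abbrev Perm' := Σ n : ℕ, Equiv.Perm (Fin n)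

/-- `Contains π σ`: the permutation `σ` occurs as a (classical) pattern in `π`. -/
def Contains (π σ : Perm') : Prop :=
  ∃ f : Fin σ.1 → Fin π.1, StrictMono f ∧
    ∀ i j : Fin σ.1, σ.2 i < σ.2 j ↔ π.2 (f i) < π.2 (f j)

/-- The set of all permutations avoiding every member of `B`. -/
def Av (B : Set Perm') : Set Perm' := { π | ∀ σ ∈ B, ¬ Contains π σ }

/-- `C` is a permutation class: a set of permutations closed under containment. -/
def IsPermClass (C : Set Perm') : Prop :=
  ∀ π ∈ C, ∀ σ : Perm', Contains π σ → σ ∈ C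

/-- `σ` is the pattern of `π` on the window of positions `[a, b)`:
it has length `b - a` and is order-isomorphic to the word `π a, …, π (b-1)`. -/
def IsPatternOn (π : Perm') (a b : ℕ) (σ : Perm') : Prop :=
  ∃ (hb : b ≤ π.1) (hσ : σ.1 = b - a),
    ∀ i j : Fin σ.1,
      σ.2 i < σ.2 j ↔
        π.2 ⟨a + (i : ℕ), by have := i.isLt; omega⟩ <
          π.2 ⟨a + (j : ℕ), by have := j.isLt; omega⟩

/-- The pattern of `π` on positions `[a, b)` lies in the set `S`. -/
def PatternIn (π : Perm') (a b : ℕ) (S : Set Perm') : Prop :=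
  ∃ σ : Perm', IsPatternOn π a b σ ∧ σ ∈ S

/-- The set of empty permutations (there is exactly one, `ε`). -/
def emptyPerms : Set Perm' := { σ | σ.1 = 0 }

/-- The juxtaposition `C | D`. -/
def Juxt (C D : Set Perm') : Set Perm' :=
  { π | ∃ i : ℕ, i ≤ π.1 ∧ PatternIn π 0 i (C ∪ emptyPerms) ∧
      PatternIn π i π.1 (D ∪ emptyPerms) }

/-- The `k × 1` grid class `C_1 | C_2 | ⋯ | C_k`. -/
def GridClass {k : ℕ} (Cs : Fin k → Set Perm') : Set Perm' :=
  { π | ∃ ix : Fin (k + 1) → ℕ, Monotone ix ∧ ix 0 = 0 ∧ ix (Fin.last k) = π.1 ∧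
      ∀ j : Fin k, PatternIn π (ix j.castSucc) (ix j.succ) (Cs j ∪ emptyPerms) }

/-- The (ordinary) generating function of a set of permutations. -/
noncomputable def gf (S : Set Perm') : PowerSeries ℚ :=
  PowerSeries.mk fun n => (Set.ncard { π : Perm' | π ∈ S ∧ π.1 = n } : ℚ)

/-- `F` is algebraic: a root of a nonzero bivariate polynomial over `ℚ`. -/
def IsAlgebraicPS (F : PowerSeries ℚ) : Prop :=
  ∃ P : MvPolynomial (Fin 2) ℚ, P ≠ 0 ∧
    MvPolynomial.aeval ![(PowerSeries.X : PowerSeries ℚ), F] P = 0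

/-- `F` is rational: `Q · F = P` for polynomials `P, Q` with `Q(0) ≠ 0`. -/
def IsRationalPS (F : PowerSeries ℚ) : Prop :=
  ∃ P Q : Polynomial ℚ, Q.coeff 0 ≠ 0 ∧
    (Q : PowerSeries ℚ) * F = (P : PowerSeries ℚ)

/-- `π` is a simple permutation: every interval (a set of consecutive positions whose
image is a set of consecutive values) has size `0`, `1` or `π.1`. -/
def IsSimple (π : Perm') : Prop :=
  ∀ a b : ℕ, a ≤ b → b ≤ π.1 →
    (∃ c : ℕ, ∀ v : Fin π.1,
        (∃ i : Fin π.1, a ≤ (i : ℕ) ∧ (i : ℕ) < b ∧ π.2 i = v) ↔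
          (c ≤ (v : ℕ) ∧ (v : ℕ) < c + (b - a))) →
    b - a = 0 ∨ b - a = 1 ∨ b - a = π.1

/-- The reverse of a permutation: `π^r i = π (n - 1 - i)`. -/
def revP (π : Perm') : Perm' := ⟨π.1, (Fin.revPerm).trans π.2⟩

/-- The complement of a permutation: `π^c i = n - 1 - π i`. -/
def compP (π : Perm') : Perm' := ⟨π.1, π.2.trans Fin.revPerm⟩

/-- The reverse-complement of a permutation. -/
def revCompP (π : Perm') : Perm' := compP (revP π)

def revClass (C : Set Perm') : Set Perm' := revP '' C
def compClass (C : Set Perm') : Set Perm' := compP '' C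
def revCompClass (C : Set Perm') : Set Perm' := revCompP '' C

/-- The permutation `12`. -/
noncomputable def p12 : Perm' := ⟨2, Equiv.ofBijective ![0, 1] (by decide)⟩
/-- The permutation `21`. -/
noncomputable def p21 : Perm' := ⟨2, Equiv.ofBijective ![1, 0] (by decide)⟩
/-- The permutation `312`. -/
noncomputable def p312 : Perm' := ⟨3, Equiv.ofBijective ![2, 0, 1] (by decide)⟩
/-- The permutation `321`. -/
noncomputable def p321 : Perm' := ⟨3, Equiv.ofBijective ![2, 1, 0] (by decide)⟩
/-- The permutation `2413`. -/
noncomputable def p2413 : Perm' := ⟨4, Equiv.ofBijective ![1, 3, 0, 2] (by decide)⟩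
/-- The permutation `3142`. -/
noncomputable def p3142 : Perm' := ⟨4, Equiv.ofBijective ![2, 0, 3, 1] (by decide)⟩

lemma exists_pattern (π : Perm') (a b : ℕ) (hb : b ≤ π.1) :
    ∃ σ : Perm', IsPatternOn π a b σ := by
  classical
  set m := b - a with hm
  have hw : ∀ i : Fin m, a + (i : ℕ) < π.1 := fun i => by have := i.isLt; omega
  set w : Fin m → Fin π.1 := fun i => π.2 ⟨a + i, hw i⟩ with hwdef
  have hinj : Function.Injective w := by
    intro i j h
    have h2 : (⟨a + (i:ℕ), hw i⟩ : Fin π.1) = ⟨a + j, hw j⟩ := π.2.injective h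
    have h3 : a + (i:ℕ) = a + (j:ℕ) := congrArg Fin.val h2
    exact Fin.ext (by omega)
  set s : Finset (Fin π.1) := Finset.univ.image w with hsdef
  have hcard : s.card = m := by
    rw [hsdef, Finset.card_image_of_injective _ hinj, Finset.card_univ, Fintype.card_fin]
  let e := s.orderIsoOfFin hcard
  let g : Fin m → {x // x ∈ s} := fun i =>
    ⟨w i, Finset.mem_image_of_mem _ (Finset.mem_univ i)⟩
  have hg : Function.Bijective g := by
    rw [Fintype.bijective_iff_injective_and_card]
    refine ⟨fun i j h => hinj (congrArg Subtype.val h), ?_⟩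
    simp [Fintype.card_coe, hcard]
  refine ⟨⟨m, (Equiv.ofBijective g hg).trans e.symm.toEquiv⟩, hb, rfl, ?_⟩
  intro i j
  show e.symm (g i) < e.symm (g j) ↔ _
  rw [e.symm.lt_iff_lt]
  exact Subtype.mk_lt_mk

lemma contains_of_prefix (π σ τ : Perm') (i j : ℕ) (hij : i ≤ j)
    (hσ : IsPatternOn π 0 j σ) (hτ : IsPatternOn π 0 i τ) : Contains σ τ := by
  obtain ⟨hbj, hσl, hσo⟩ := hσ
  obtain ⟨hbi, hτl, hτo⟩ := hτ
  have hτi : τ.1 = i := by omega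
  have hσj : σ.1 = j := by omega
  refine ⟨fun k => ⟨k, by have := k.isLt; omega⟩, ?_, ?_⟩
  · intro k l hkl
    exact hkl
  · intro k l
    rw [hτo k l, hσo ⟨k, by have := k.isLt; omega⟩ ⟨l, by have := l.isLt; omega⟩]

lemma increasing_of_avoid21 (σ : Perm') (h : σ ∈ Av {p21}) :
    ∀ i j : Fin σ.1, i < j → σ.2 i < σ.2 j := by
  intro i j hij
  by_contra hle
  have hne : σ.2 i ≠ σ.2 j := fun he => absurd (σ.2.injective he) (Fin.ne_of_lt hij)
  have hji : σ.2 j < σ.2 i := lt_of_le_of_ne (not_lt.mp hle) (Ne.symm hne)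
  have hv0 : ∀ x : Fin p21.1, (x : ℕ) = 0 → ((p21.2 x : Fin p21.1) : ℕ) = 1 := by
    intro x h0
    have hx : x = ⟨0, lt_of_le_of_lt (Nat.zero_le _) x.isLt⟩ := Fin.ext h0
    rw [hx]; rfl
  have hv1 : ∀ x : Fin p21.1, (x : ℕ) = 1 → ((p21.2 x : Fin p21.1) : ℕ) = 0 := by
    intro x h1
    have hx : x = ⟨1, h1 ▸ x.isLt⟩ := Fin.ext h1
    rw [hx]; rfl
  refine h p21 rfl ⟨fun a => if (a : ℕ) = 0 then i else j, ?_, ?_⟩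
  · intro a b hab
    have ha : (a : ℕ) < 2 := a.isLt
    have hb : (b : ℕ) < 2 := b.isLt
    have hab' : (a : ℕ) < (b : ℕ) := hab
    have ea : (a : ℕ) = 0 := by omega
    have eb : (b : ℕ) = 1 := by omega
    simp only [ea, eb]
    simpa using hij
  · intro a b
    have ha : (a : ℕ) < 2 := a.isLt
    have hb : (b : ℕ) < 2 := b.isLt
    rcases (by omega : (a : ℕ) = 0 ∨ (a : ℕ) = 1) with ea | ea <;>
      rcases (by omega : (b : ℕ) = 0 ∨ (b : ℕ) = 1) with eb | eb <;> beta_reduce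
    · rw [Fin.lt_def, hv0 a ea, hv0 b eb, if_pos ea, if_pos eb]
      exact iff_of_false (by omega) (lt_irrefl _)
    · rw [Fin.lt_def, hv0 a ea, hv1 b eb, if_pos ea, if_neg (by omega)]
      exact iff_of_false (by omega) (not_lt.mpr hji.le)
    · rw [Fin.lt_def, hv1 a ea, hv0 b eb, if_neg (by omega), if_pos eb]
      exact iff_of_true (by omega) hji
    · rw [Fin.lt_def, hv1 a ea, hv1 b eb, if_neg (by omega), if_neg (by omega)]
      exact iff_of_false (by omega) (lt_irrefl _)

/-- the greedy gridding of a permutation in `C | Av(21)` exists and is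
unique: a unique index `i` with `0 ≤ i ≤ n - 1` such that the pattern on `[0, i)` is in
`C ∪ {ε}`, the suffix `π i < π (i+1) < ⋯ < π (n-1)` is increasing, and either `i = 0`
or `π i < π (i - 1)`. -/
theorem stmt0 (C : Set Perm') (hC : IsPermClass C) (π : Perm')
    (hπ : π ∈ Juxt C (Av {p21})) (hn : 1 ≤ π.1) :
    ∃! i : ℕ, i ≤ π.1 - 1 ∧
      PatternIn π 0 i (C ∪ emptyPerms) ∧
      (∀ a b : Fin π.1, i ≤ (a : ℕ) → a < b → π.2 a < π.2 b) ∧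
      (i = 0 ∨ ∀ h : i < π.1, π.2 ⟨i, h⟩ < π.2 ⟨i - 1, by omega⟩) := by
  classical
  obtain ⟨j, hj, hpre, hsuf⟩ := hπ
  set n := π.1 with hn'
  have hPj : ∀ a b : Fin n, j ≤ (a : ℕ) → a < b → π.2 a < π.2 b := by
    obtain ⟨σ, ⟨hbn, hσl, hord⟩, hσmem⟩ := hsuf
    intro a b ha hab
    rcases hσmem with hσC | hσe
    · have hk : (a : ℕ) - j < σ.1 := by have := a.isLt; omega
      have hl : (b : ℕ) - j < σ.1 := by have := b.isLt; omega
      have hmono := increasing_of_avoid21 σ hσC ⟨(a:ℕ) - j, hk⟩ ⟨(b:ℕ) - j, hl⟩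
        (by have : (a:ℕ) < (b:ℕ) := hab; exact Fin.mk_lt_mk.mpr (by omega))
      rw [hord] at hmono
      have ea : (⟨j + ((⟨(a:ℕ) - j, hk⟩ : Fin σ.1) : ℕ), by have := hk; omega⟩ : Fin n) = a :=
        Fin.ext (show j + ((a:ℕ) - j) = (a:ℕ) by omega)
      have eb : (⟨j + ((⟨(b:ℕ) - j, hl⟩ : Fin σ.1) : ℕ), by have := hl; omega⟩ : Fin n) = b :=
        Fin.ext (show j + ((b:ℕ) - j) = (b:ℕ) by omega)
      rwa [ea, eb] at hmono
    · have : σ.1 = 0 := hσe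
      have := a.isLt
      omega
  have hP : ∃ k : ℕ, ∀ a b : Fin n, k ≤ (a : ℕ) → a < b → π.2 a < π.2 b := ⟨j, hPj⟩
  set i := Nat.find hP with hi
  have hPi : ∀ a b : Fin n, i ≤ (a : ℕ) → a < b → π.2 a < π.2 b := Nat.find_spec hP
  have hij : i ≤ j := Nat.find_le hPj
  have hile : i ≤ n - 1 := by
    refine Nat.find_le ?_
    intro a b ha hab
    have := a.isLt; have := b.isLt
    have : (a : ℕ) < (b : ℕ) := hab
    omega
  have hpat : PatternIn π 0 i (C ∪ emptyPerms) := by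
    obtain ⟨τ, hτ⟩ := exists_pattern π 0 i (by omega)
    refine ⟨τ, hτ, ?_⟩
    by_cases h0 : i = 0
    · right
      obtain ⟨_, hτl, _⟩ := hτ
      show τ.1 = 0
      omega
    · obtain ⟨σ, hσpat, hσmem⟩ := hpre
      have hσl : σ.1 = j := by obtain ⟨_, h, _⟩ := hσpat; omega
      rcases hσmem with hσC | hσe
      · exact Or.inl (hC σ hσC τ (contains_of_prefix π σ τ i j hij hσpat hτ))
      · have : σ.1 = 0 := hσe
        omega
  have hdesc : i = 0 ∨ ∀ h : i < n, π.2 ⟨i, h⟩ < π.2 ⟨i - 1, by omega⟩ := by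
    by_cases h0 : i = 0
    · exact Or.inl h0
    · refine Or.inr fun h => ?_
      have hnp : ¬ ∀ a b : Fin n, i - 1 ≤ (a : ℕ) → a < b → π.2 a < π.2 b :=
        Nat.find_min hP (by omega)
      push_neg at hnp
      obtain ⟨a, b, ha, hab, hba⟩ := hnp
      have hba' : π.2 b < π.2 a := by
        refine lt_of_le_of_ne hba fun he => ?_
        exact absurd (π.2.injective he) (Fin.ne_of_lt hab).symm
      have hai : (a : ℕ) < i := by
        by_contra hc
        exact absurd (hPi a b (not_lt.mp hc) hab) (not_lt.mpr hba)
      have haeq : a = ⟨i - 1, by omega⟩ := Fin.ext (show (a : ℕ) = i - 1 by omega)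
      have hbi : i ≤ (b : ℕ) := by
        have : (a : ℕ) < (b : ℕ) := hab
        omega
      have hle : π.2 ⟨i, h⟩ ≤ π.2 b := by
        rcases eq_or_lt_of_le hbi with heq | hlt
        · have : (⟨i, h⟩ : Fin n) = b := Fin.ext heq
          rw [this]
        · exact le_of_lt (hPi ⟨i, h⟩ b (le_refl _) hlt)
      calc π.2 ⟨i, h⟩ ≤ π.2 b := hle
        _ < π.2 a := hba'
        _ = π.2 ⟨i - 1, by omega⟩ := congrArg _ haeq
  refine ⟨i, ⟨hile, hpat, hPi, hdesc⟩, ?_⟩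
  rintro i' ⟨hi'le, _, hinc', hc'⟩
  have h1 : i ≤ i' := Nat.find_le hinc'
  rcases eq_or_lt_of_le h1 with heq | hlt
  · exact heq.symm
  · exfalso
    have hi'0 : i' ≠ 0 := by omega
    rcases hc' with h0 | hdesc'
    · exact hi'0 h0
    · have hi'n : i' < n := by omega
      have hd := hdesc' hi'n
      have h2 : π.2 ⟨i' - 1, by omega⟩ < π.2 ⟨i', hi'n⟩ :=
        hPi ⟨i' - 1, by omega⟩ ⟨i', hi'n⟩ (show i ≤ i' - 1 by omega)
          (Fin.mk_lt_mk.mpr (by omega))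
      exact absurd h2 (not_lt.mpr (le_of_lt hd))
end

section
/- Let F ∈ ℚ[[z]] be the generating function of the grid class Av(21)|Av(21)|Av(21) (the set of permutations that can be split into three consecutive increasing segments). Then (1−z)³(1−2z)²(1−3z)·F = (1−z)²(1−2z)²(1−3z) + z²(1−z)(1−2z)(1−3z) + z³(1+z−4z²) in ℚ[[z]]; equivalently F = 1/(1−z) + z²/((1−z)²(1−2z)) + z³(1+z−4z²)/((1−z)³(1−2z)²(1−3z)). In particular F is rational. -/
open Finset
open scoped Classical

variable {n : ℕ}

def vv (σ : Equiv.Perm (Fin n)) (m : ℕ) : ℕ :=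
  if h : m < n then (σ ⟨m, h⟩ : ℕ) else n

def IncOn (σ : Equiv.Perm (Fin n)) (a b : ℕ) : Prop :=
  ∀ p q : ℕ, a ≤ p → p < q → q < b → q < n → vv σ p < vv σ q

def Inc3 (σ : Equiv.Perm (Fin n)) (i j : ℕ) : Prop :=
  IncOn σ 0 i ∧ IncOn σ i j ∧ IncOn σ j n

lemma vv_lt_iff {σ : Equiv.Perm (Fin n)} {p q : ℕ} (hp : p < n) (hq : q < n) :
    vv σ p < vv σ q ↔ σ ⟨p, hp⟩ < σ ⟨q, hq⟩ := by
  unfold vv; rw [dif_pos hp, dif_pos hq]; exact Iff.rfl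

/-- card of an index window -/
lemma card_window (a b : ℕ) (hbn : b ≤ n) :
    ((univ : Finset (Fin n)).filter fun p : Fin n => a ≤ (p : ℕ) ∧ (p : ℕ) < b).card = b - a := by
  have h : ∀ m ∈ Finset.Ico a b, m < n := fun m hm => by
    rw [Finset.mem_Ico] at hm; omega
  have : ((univ : Finset (Fin n)).filter fun p : Fin n => a ≤ (p : ℕ) ∧ (p : ℕ) < b)
      = (Finset.Ico a b).attachFin h := by
    ext x; simp [Finset.mem_attachFin, Finset.mem_Ico]
  rw [this, Finset.card_attachFin, Nat.card_Ico]

lemma card_window0 (b : ℕ) (hbn : b ≤ n) :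
    ((univ : Finset (Fin n)).filter fun p : Fin n => (p : ℕ) < b).card = b := by
  have h : ∀ m ∈ Finset.range b, m < n := fun m hm => by
    rw [Finset.mem_range] at hm; omega
  have : ((univ : Finset (Fin n)).filter fun p : Fin n => (p : ℕ) < b)
      = (Finset.range b).attachFin h := by
    ext x; simp [Finset.mem_attachFin]
  rw [this, Finset.card_attachFin, Finset.card_range]

section Main

variable (i j : ℕ)

noncomputable def imgA (σ : Equiv.Perm (Fin n)) : Finset (Fin n) :=
  Finset.image σ ((univ : Finset (Fin n)).filter fun p : Fin n => (p : ℕ) < i)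

noncomputable def imgB (σ : Equiv.Perm (Fin n)) : Finset (Fin n) :=
  Finset.image σ ((univ : Finset (Fin n)).filter fun p : Fin n => i ≤ (p : ℕ) ∧ (p : ℕ) < j)

lemma card_imgA (σ : Equiv.Perm (Fin n)) (hin : i ≤ n) : (imgA i σ).card = i := by
  rw [imgA, Finset.card_image_of_injective _ σ.injective]
  exact card_window0 i hin

lemma card_imgB (σ : Equiv.Perm (Fin n)) (hjn : j ≤ n) : (imgB i j σ).card = j - i := by
  rw [imgB, Finset.card_image_of_injective _ σ.injective]
  exact card_window i j hjn

lemma disj_imgAB (σ : Equiv.Perm (Fin n)) : Disjoint (imgA i σ) (imgB i j σ) := by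
  rw [imgA, imgB, Finset.disjoint_image σ.injective]
  rw [Finset.disjoint_filter]
  intro p _ hp; simp; omega

/-- a strictly monotone map from `Fin i` built from the first window -/
lemma strictMono_block (σ : Equiv.Perm (Fin n)) {a b : ℕ} (hb : b ≤ n)
    (h : IncOn σ a b) :
    StrictMono (fun q : Fin (b - a) => σ ⟨a + (q : ℕ), by omega⟩) := by
  intro q r hqr
  have := h (a + q) (a + r) (by omega) (by omega) (by omega) (by omega)
  rw [vv_lt_iff] at this
  exact this

end Main

section Main2
variable (i j : ℕ)

lemma card_windowHi (hjn : j ≤ n) :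
    ((univ : Finset (Fin n)).filter fun p : Fin n => j ≤ (p : ℕ)).card = n - j := by
  have h : ∀ m ∈ Finset.Ico j n, m < n := fun m hm => by
    rw [Finset.mem_Ico] at hm; omega
  have : ((univ : Finset (Fin n)).filter fun p : Fin n => j ≤ (p : ℕ))
      = (Finset.Ico j n).attachFin h := by
    ext x; simp [Finset.mem_attachFin, Finset.mem_Ico]
  rw [this, Finset.card_attachFin, Nat.card_Ico]

noncomputable def imgC (σ : Equiv.Perm (Fin n)) : Finset (Fin n) :=
  Finset.image σ ((univ : Finset (Fin n)).filter fun p : Fin n => j ≤ (p : ℕ))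

lemma card_imgC (σ : Equiv.Perm (Fin n)) (hjn : j ≤ n) : (imgC j σ).card = n - j := by
  rw [imgC, Finset.card_image_of_injective _ σ.injective]
  exact card_windowHi j hjn

lemma image_filter_not (σ : Equiv.Perm (Fin n)) (P : Fin n → Prop) [DecidablePred P] :
    Finset.image σ ((univ : Finset (Fin n)).filter fun p => ¬ P p)
      = (Finset.image σ ((univ : Finset (Fin n)).filter P))ᶜ := by
  ext x
  simp only [Finset.mem_image, Finset.mem_filter, Finset.mem_univ, true_and,
    Finset.mem_compl]
  constructor
  · rintro ⟨p, hp, rfl⟩ ⟨q, hq, he⟩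
    exact hp (σ.injective he ▸ hq)
  · intro h
    exact ⟨σ.symm x, fun hP => h ⟨σ.symm x, hP, by simp⟩, by simp⟩

lemma imgC_eq_compl (hij : i ≤ j) (σ : Equiv.Perm (Fin n)) :
    imgC j σ = (imgA i σ ∪ imgB i j σ)ᶜ := by
  have h1 : ((univ : Finset (Fin n)).filter fun p : Fin n => j ≤ (p : ℕ))
      = ((univ : Finset (Fin n)).filter fun p : Fin n => ¬ ((p : ℕ) < j)) := by
    apply Finset.filter_congr; intro p _; simp
  have h2 : imgA i σ ∪ imgB i j σ
      = Finset.image σ ((univ : Finset (Fin n)).filter fun p : Fin n => (p : ℕ) < j) := by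
    rw [imgA, imgB, ← Finset.image_union]
    congr 1
    rw [← Finset.filter_or]
    apply Finset.filter_congr; intro p _
    constructor
    · intro h; omega
    · intro h; omega
  rw [imgC, h1, h2, image_filter_not]

lemma block_eq_A {σ : Equiv.Perm (Fin n)} (hij : i ≤ j) (hjn : j ≤ n)
    (hσ : Inc3 σ i j) (p : Fin n) (hp : (p : ℕ) < i) :
    σ p = (imgA i σ).orderEmbOfFin (card_imgA i σ (le_trans hij hjn)) ⟨p, hp⟩ := by
  have hf : ∀ q : Fin i, (fun q : Fin i => σ ⟨(q : ℕ), by omega⟩) q ∈ imgA i σ := by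
    intro q
    exact Finset.mem_image_of_mem σ (by simp [Finset.mem_filter])
  have hm : StrictMono (fun q : Fin i => σ ⟨(q : ℕ), by omega⟩) := by
    intro q r hqr
    have := hσ.1 q r (Nat.zero_le _) hqr (by omega) (by omega)
    rwa [vv_lt_iff] at this
  have := Finset.orderEmbOfFin_unique (card_imgA i σ (le_trans hij hjn)) hf hm
  have e := congrFun this ⟨p, hp⟩
  simp only at e
  rw [← e]

lemma block_eq_B {σ : Equiv.Perm (Fin n)} (hij : i ≤ j) (hjn : j ≤ n)
    (hσ : Inc3 σ i j) (p : Fin n) (hp1 : i ≤ (p : ℕ)) (hp2 : (p : ℕ) < j) :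
    σ p = (imgB i j σ).orderEmbOfFin (card_imgB i j σ hjn) ⟨(p : ℕ) - i, by omega⟩ := by
  have hf : ∀ q : Fin (j - i), (fun q : Fin (j - i) => σ ⟨i + (q : ℕ), by omega⟩) q ∈ imgB i j σ := by
    intro q
    exact Finset.mem_image_of_mem σ (by simp [Finset.mem_filter]; omega)
  have hm : StrictMono (fun q : Fin (j - i) => σ ⟨i + (q : ℕ), by omega⟩) := by
    intro q r hqr
    have := hσ.2.1 (i + q) (i + r) (by omega) (by omega) (by omega) (by omega)
    rwa [vv_lt_iff] at this
  have := Finset.orderEmbOfFin_unique (card_imgB i j σ hjn) hf hm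
  have e := congrFun this ⟨(p : ℕ) - i, by omega⟩
  simp only at e
  rw [← e]
  congr 1
  exact Fin.ext (by simp; omega)

lemma block_eq_C {σ : Equiv.Perm (Fin n)} (hij : i ≤ j) (hjn : j ≤ n)
    (hσ : Inc3 σ i j) (p : Fin n) (hp1 : j ≤ (p : ℕ)) :
    σ p = (imgC j σ).orderEmbOfFin (card_imgC j σ hjn) ⟨(p : ℕ) - j, by omega⟩ := by
  have hf : ∀ q : Fin (n - j), (fun q : Fin (n - j) => σ ⟨j + (q : ℕ), by omega⟩) q ∈ imgC j σ := by
    intro q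
    exact Finset.mem_image_of_mem σ (by simp [Finset.mem_filter])
  have hm : StrictMono (fun q : Fin (n - j) => σ ⟨j + (q : ℕ), by omega⟩) := by
    intro q r hqr
    have := hσ.2.2 (j + q) (j + r) (by omega) (by omega) (by omega) (by omega)
    rwa [vv_lt_iff] at this
  have := Finset.orderEmbOfFin_unique (card_imgC j σ hjn) hf hm
  have e := congrFun this ⟨(p : ℕ) - j, by omega⟩
  simp only at e
  rw [← e]
  congr 1
  exact Fin.ext (by simp; omega)

lemma perm_determined {σ τ : Equiv.Perm (Fin n)} (hij : i ≤ j) (hjn : j ≤ n)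
    (hσ : Inc3 σ i j) (hτ : Inc3 τ i j)
    (hA : imgA i σ = imgA i τ) (hB : imgB i j σ = imgB i j τ) : σ = τ := by
  have hC : imgC j σ = imgC j τ := by
    rw [imgC_eq_compl i j hij, imgC_eq_compl i j hij, hA, hB]
  apply Equiv.ext
  intro p
  rcases Nat.lt_or_ge (p : ℕ) i with hp | hp
  · rw [block_eq_A i j hij hjn hσ p hp, block_eq_A i j hij hjn hτ p hp]
    simp only [hA]
  · rcases Nat.lt_or_ge (p : ℕ) j with hp2 | hp2
    · rw [block_eq_B i j hij hjn hσ p hp hp2, block_eq_B i j hij hjn hτ p hp hp2]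
      simp only [hB]
    · rw [block_eq_C i j hij hjn hσ p hp2, block_eq_C i j hij hjn hτ p hp2]
      simp only [hC]

end Main2

section Main3
variable (i j : ℕ)

lemma exists_perm (hij : i ≤ j) (hjn : j ≤ n) (A B : Finset (Fin n))
    (hA : A.card = i) (hB : B.card = j - i) (hAB : Disjoint A B) :
    ∃ σ : Equiv.Perm (Fin n), Inc3 σ i j ∧ imgA i σ = A ∧ imgB i j σ = B := by
  set C := (A ∪ B)ᶜ with hCdef
  have hABcard : (A ∪ B).card = j := by
    rw [Finset.card_union_of_disjoint hAB, hA, hB]; omega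
  have hC : C.card = n - j := by
    rw [hCdef, Finset.card_compl, hABcard, Fintype.card_fin]
  have hAC : ∀ x : Fin n, x ∈ A → x ∈ C → False := by
    intro x h1 h2
    exact (Finset.mem_compl.1 h2) (Finset.mem_union_left _ h1)
  have hBC : ∀ x : Fin n, x ∈ B → x ∈ C → False := by
    intro x h1 h2
    exact (Finset.mem_compl.1 h2) (Finset.mem_union_right _ h1)
  set g : Fin n → Fin n := fun p =>
    if h : (p : ℕ) < i then A.orderEmbOfFin hA ⟨p, h⟩
    else if h' : (p : ℕ) < j then B.orderEmbOfFin hB ⟨(p : ℕ) - i, by omega⟩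
    else C.orderEmbOfFin hC ⟨(p : ℕ) - j, by have := p.isLt; omega⟩ with hgdef
  have gA : ∀ (p : Fin n) (h : (p : ℕ) < i), g p = A.orderEmbOfFin hA ⟨p, h⟩ := by
    intro p h; rw [hgdef]; simp only [dif_pos h]
  have gB : ∀ (p : Fin n) (h1 : ¬ (p : ℕ) < i) (h2 : (p : ℕ) < j),
      g p = B.orderEmbOfFin hB ⟨(p : ℕ) - i, by omega⟩ := by
    intro p h1 h2; rw [hgdef]; simp only [dif_neg h1, dif_pos h2]
  have gC : ∀ (p : Fin n) (h2 : ¬ (p : ℕ) < j),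
      g p = C.orderEmbOfFin hC ⟨(p : ℕ) - j, by have := p.isLt; omega⟩ := by
    intro p h2; rw [hgdef]; simp only [dif_neg (by omega : ¬ (p:ℕ) < i), dif_neg h2]
  have gmemA : ∀ (p : Fin n), (p : ℕ) < i → g p ∈ A := by
    intro p h; rw [gA p h]; exact Finset.orderEmbOfFin_mem A hA _
  have gmemB : ∀ (p : Fin n), ¬ (p : ℕ) < i → (p : ℕ) < j → g p ∈ B := by
    intro p h1 h2; rw [gB p h1 h2]; exact Finset.orderEmbOfFin_mem B hB _
  have gmemC : ∀ (p : Fin n), ¬ (p : ℕ) < j → g p ∈ C := by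
    intro p h2; rw [gC p h2]; exact Finset.orderEmbOfFin_mem C hC _
  have ginj : Function.Injective g := by
    intro p q h
    by_cases hpA : (p : ℕ) < i <;> by_cases hqA : (q : ℕ) < i
    · rw [gA p hpA, gA q hqA] at h
      have := (A.orderEmbOfFin hA).injective h
      exact Fin.ext (by simpa [Fin.ext_iff] using this)
    · by_cases hqB : (q : ℕ) < j
      · exact absurd (gmemB q hqA hqB) (fun hq => Finset.disjoint_left.1 hAB (h ▸ gmemA p hpA) hq)
      · exact absurd (gmemC q hqB) (fun hq => hAC _ (h ▸ gmemA p hpA) hq)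
    · by_cases hpB : (p : ℕ) < j
      · exact absurd (gmemA q hqA) (fun hq => Finset.disjoint_left.1 hAB hq (h ▸ gmemB p hpA hpB))
      · exact absurd (gmemA q hqA) (fun hq => hAC _ hq (h ▸ gmemC p hpB))
    · by_cases hpB : (p : ℕ) < j <;> by_cases hqB : (q : ℕ) < j
      · rw [gB p hpA hpB, gB q hqA hqB] at h
        have := (B.orderEmbOfFin hB).injective h
        have : (p : ℕ) - i = (q : ℕ) - i := by simpa [Fin.ext_iff] using this
        exact Fin.ext (by omega)
      · exact absurd (gmemC q hqB) (fun hq => hBC _ (h ▸ gmemB p hpA hpB) hq)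
      · exact absurd (gmemB q hqA hqB) (fun hq => hBC _ hq (h ▸ gmemC p hpB))
      · rw [gC p hpB, gC q hqB] at h
        have := (C.orderEmbOfFin hC).injective h
        have : (p : ℕ) - j = (q : ℕ) - j := by simpa [Fin.ext_iff] using this
        exact Fin.ext (by omega)
  set σ : Equiv.Perm (Fin n) := Equiv.ofBijective g ((Finite.injective_iff_bijective).1 ginj)
    with hσdef
  have hσg : ∀ p, σ p = g p := fun p => rfl
  have hinc : Inc3 σ i j := by
    refine ⟨?_, ?_, ?_⟩ <;> intro p q hap hpq hqb hqn
    · rw [vv_lt_iff (by omega) hqn, hσg, hσg,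
        gA ⟨p, by omega⟩ (by simpa using by omega : ((⟨p, by omega⟩ : Fin n) : ℕ) < i),
        gA ⟨q, hqn⟩ (by simpa using hqb)]
      exact (A.orderEmbOfFin hA).strictMono (by simp [Fin.lt_def]; omega)
    · rw [vv_lt_iff (by omega) hqn, hσg, hσg,
        gB ⟨p, by omega⟩ (by simp; omega) (by simp; omega),
        gB ⟨q, hqn⟩ (by simp; omega) (by simpa using hqb)]
      exact (B.orderEmbOfFin hB).strictMono (by simp [Fin.lt_def]; omega)
    · rw [vv_lt_iff (by omega) hqn, hσg, hσg,
        gC ⟨p, by omega⟩ (by simp; omega), gC ⟨q, hqn⟩ (by simp; omega)]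
      exact (C.orderEmbOfFin hC).strictMono (by simp [Fin.lt_def]; omega)
  refine ⟨σ, hinc, ?_, ?_⟩
  · apply Finset.eq_of_subset_of_card_le
    · intro x hx
      rw [imgA, Finset.mem_image] at hx
      obtain ⟨p, hp, rfl⟩ := hx
      rw [Finset.mem_filter] at hp
      rw [hσg]
      exact gmemA p hp.2
    · rw [hA, card_imgA i σ (le_trans hij hjn)]
  · apply Finset.eq_of_subset_of_card_le
    · intro x hx
      rw [imgB, Finset.mem_image] at hx
      obtain ⟨p, hp, rfl⟩ := hx
      rw [Finset.mem_filter] at hp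
      rw [hσg]
      exact gmemB p (by omega) hp.2.2
    · rw [hB, card_imgB i j σ hjn]

lemma L1 (hij : i ≤ j) (hjn : j ≤ n) :
    ((univ : Finset (Equiv.Perm (Fin n))).filter fun σ => Inc3 σ i j).card
      = n.choose i * (n - i).choose (j - i) := by
  classical
  set pairs := ((Finset.univ.powersetCard i ×ˢ Finset.univ.powersetCard (j - i)).filter
      fun p : Finset (Fin n) × Finset (Fin n) => Disjoint p.1 p.2) with hpairsdef
  have hp1 : ∀ p ∈ pairs, p.1 ∈ (Finset.univ : Finset (Fin n)).powersetCard i := by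
    intro p hp
    rw [hpairsdef, Finset.mem_filter, Finset.mem_product] at hp
    exact hp.1.1
  have hpairs : pairs.card = n.choose i * (n - i).choose (j - i) := by
    rw [Finset.card_eq_sum_card_fiberwise hp1]
    have hfib : ∀ A ∈ (Finset.univ : Finset (Fin n)).powersetCard i,
        (pairs.filter fun p => p.1 = A).card = (n - i).choose (j - i) := by
      intro A hA
      have hAcard : A.card = i := Finset.mem_powersetCard_univ.1 hA
      have : (pairs.filter fun p => p.1 = A).card = (Aᶜ.powersetCard (j - i)).card := by
        apply Finset.card_bij (fun p _ => p.2)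
        · intro p hp
          rw [Finset.mem_filter, hpairsdef, Finset.mem_filter, Finset.mem_product] at hp
          rw [Finset.mem_powersetCard]
          refine ⟨?_, Finset.mem_powersetCard_univ.1 hp.1.1.2⟩
          intro x hx
          rw [Finset.mem_compl]
          exact fun hxA => Finset.disjoint_left.1 hp.1.2 (hp.2 ▸ hxA) hx
        · intro p hp q hq h
          rw [Finset.mem_filter] at hp hq
          exact Prod.ext (hp.2.trans hq.2.symm) h
        · intro B hB
          rw [Finset.mem_powersetCard] at hB
          refine ⟨(A, B), ?_, rfl⟩
          rw [Finset.mem_filter, hpairsdef, Finset.mem_filter, Finset.mem_product]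
          refine ⟨⟨⟨Finset.mem_powersetCard_univ.2 hAcard, Finset.mem_powersetCard_univ.2 hB.2⟩, ?_⟩, rfl⟩
          rw [Finset.disjoint_left]
          intro x hxA hxB
          have := hB.1 hxB
          rw [Finset.mem_compl] at this
          exact this hxA
      rw [this, Finset.card_powersetCard, Finset.card_compl, Fintype.card_fin, hAcard]
    rw [Finset.sum_congr rfl hfib, Finset.sum_const, Finset.card_powersetCard,
      Finset.card_univ, Fintype.card_fin, smul_eq_mul]
  rw [← hpairs]
  apply Finset.card_bij (fun σ _ => (imgA i σ, imgB i j σ))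
  · intro σ hσ
    rw [Finset.mem_filter] at hσ
    rw [hpairsdef, Finset.mem_filter, Finset.mem_product]
    exact ⟨⟨Finset.mem_powersetCard_univ.2 (card_imgA i σ (le_trans hij hjn)),
      Finset.mem_powersetCard_univ.2 (card_imgB i j σ hjn)⟩, disj_imgAB i j σ⟩
  · intro σ hσ τ hτ h
    rw [Finset.mem_filter] at hσ hτ
    rw [Prod.ext_iff] at h
    exact perm_determined i j hij hjn hσ.2 hτ.2 h.1 h.2
  · intro p hp
    rw [hpairsdef, Finset.mem_filter, Finset.mem_product] at hp
    obtain ⟨σ, hinc, hA, hB⟩ := exists_perm i j hij hjn p.1 p.2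
      (Finset.mem_powersetCard_univ.1 hp.1.1) (Finset.mem_powersetCard_univ.1 hp.1.2) hp.2
    exact ⟨σ, Finset.mem_filter.2 ⟨Finset.mem_univ _, hinc⟩, by rw [hA, hB]⟩

end Main3
lemma vv_inj {σ : Equiv.Perm (Fin n)} {p q : ℕ} (hp : p < n) (hq : q < n)
    (h : vv σ p = vv σ q) : p = q := by
  unfold vv at h
  rw [dif_pos hp, dif_pos hq] at h
  have := σ.injective (Fin.val_injective h)
  exact congrArg Fin.val this

def Des (σ : Equiv.Perm (Fin n)) : Finset ℕ :=
  (Finset.Ico 1 n).filter (fun c => vv σ c < vv σ (c - 1))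

lemma mem_Des {σ : Equiv.Perm (Fin n)} {c : ℕ} :
    c ∈ Des σ ↔ (1 ≤ c ∧ c < n) ∧ vv σ c < vv σ (c - 1) := by
  simp [Des, Finset.mem_filter, Finset.mem_Ico]

lemma incOn_iff {σ : Equiv.Perm (Fin n)} {a b : ℕ} :
    IncOn σ a b ↔ ∀ c ∈ Des σ, ¬ (a < c ∧ c < b) := by
  constructor
  · intro h c hc ⟨hac, hcb⟩
    rw [mem_Des] at hc
    obtain ⟨⟨h1, h2⟩, hlt⟩ := hc
    have := h (c-1) c (by omega) (by omega) hcb h2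
    omega
  · intro h p q hap hpq hqb hqn
    induction q with
    | zero => omega
    | succ q ih =>
      have hq1 : q + 1 ∈ Finset.Ico 1 n := by simp; omega
      have hnd : ¬ vv σ (q+1) < vv σ q := by
        intro hlt
        have : q + 1 ∈ Des σ := by
          rw [mem_Des]; exact ⟨⟨by omega, hqn⟩, by simpa using hlt⟩
        exact h _ this ⟨by omega, hqb⟩
      have hne : vv σ q ≠ vv σ (q+1) := fun he => by
        have := vv_inj (by omega) hqn he; omega
      have hlast : vv σ q < vv σ (q+1) := by omega
      rcases Nat.lt_or_ge p q with hpq' | hpq'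
      · exact lt_trans (ih hpq' (by omega) (by omega)) hlast
      · have : p = q := by omega
        subst this; exact hlast

lemma inc3_iff_des_subset {σ : Equiv.Perm (Fin n)} {i j : ℕ}
    (hij : i ≤ j) (hjn : j ≤ n) :
    Inc3 σ i j ↔ Des σ ⊆ {i, j} := by
  constructor
  · rintro ⟨h1, h2, h3⟩ c hc
    rw [incOn_iff] at h1 h2 h3
    have hc' := hc
    rw [mem_Des] at hc'
    have e1 := h1 c hc
    have e2 := h2 c hc
    have e3 := h3 c hc
    simp only [Finset.mem_insert, Finset.mem_singleton]
    omega
  · intro h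
    refine ⟨?_, ?_, ?_⟩ <;> rw [incOn_iff] <;> intro c hc hcc <;>
      · have := h hc
        have hc' := mem_Des.1 hc
        simp only [Finset.mem_insert, Finset.mem_singleton] at this
        omega

lemma card_des_le_two_iff {σ : Equiv.Perm (Fin n)} :
    (Des σ).card ≤ 2 ↔ ∃ i j : ℕ, i ≤ j ∧ j ≤ n ∧ Inc3 σ i j := by
  constructor
  · intro h
    interval_cases hD : (Des σ).card
    · refine ⟨0, 0, le_refl _, Nat.zero_le _, ?_⟩
      rw [inc3_iff_des_subset (le_refl 0) (Nat.zero_le n)]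
      rw [Finset.card_eq_zero] at hD
      simp [hD]
    · obtain ⟨d, hd⟩ := Finset.card_eq_one.1 hD
      have hdn : d < n := by
        have : d ∈ Des σ := hd ▸ Finset.mem_singleton_self d
        exact (mem_Des.1 this).1.2
      refine ⟨d, d, le_refl _, by omega, ?_⟩
      rw [inc3_iff_des_subset (le_refl d) (by omega), hd]
      intro x hx; simp at hx ⊢; omega
    · obtain ⟨d, e, hde, hd⟩ := Finset.card_eq_two.1 hD
      have hdm : d ∈ Des σ := hd ▸ by simp
      have hem : e ∈ Des σ := hd ▸ by simp
      have hdn : d < n := (mem_Des.1 hdm).1.2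
      have hen : e < n := (mem_Des.1 hem).1.2
      refine ⟨min d e, max d e, le_max_of_le_left (min_le_left _ _), by omega, ?_⟩
      rw [inc3_iff_des_subset (le_max_of_le_left (min_le_left _ _)) (by omega), hd]
      intro x hx; simp at hx ⊢; omega
  · rintro ⟨i, j, hij, hjn, h⟩
    rw [inc3_iff_des_subset hij hjn] at h
    calc (Des σ).card ≤ ({i, j} : Finset ℕ).card := Finset.card_le_card h
      _ ≤ 2 := Finset.card_insert_le _ _ |>.trans (by simp)

noncomputable def Neq (n : ℕ) (S : Finset ℕ) : ℕ :=
  ((univ : Finset (Equiv.Perm (Fin n))).filter fun σ => Des σ = S).card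

lemma filter_des_subset_card (i j : ℕ) (hij : i ≤ j) (hjn : j ≤ n) :
    ((univ : Finset (Equiv.Perm (Fin n))).filter fun σ => Des σ ⊆ ({i, j} : Finset ℕ)).card
      = n.choose i * (n - i).choose (j - i) := by
  rw [← L1 i j hij hjn]
  congr 1
  apply Finset.filter_congr
  intro σ _
  simpa using (inc3_iff_des_subset hij hjn).symm

lemma neq_empty : Neq n ∅ = 1 := by
  have h : ((univ : Finset (Equiv.Perm (Fin n))).filter fun σ => Des σ = ∅)
      = ((univ : Finset (Equiv.Perm (Fin n))).filter fun σ => Des σ ⊆ ({0, 0} : Finset ℕ)) := by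
    apply Finset.filter_congr
    intro σ _
    constructor
    · intro h; simp [h]
    · intro h
      rw [Finset.eq_empty_iff_forall_notMem]
      intro c hc
      have h1 := (mem_Des.1 hc).1.1
      have := h hc
      simp at this
      omega
  rw [Neq, h, filter_des_subset_card 0 0 le_rfl (Nat.zero_le n)]
  simp

lemma hdisj_filter (S T : Finset ℕ) (hST : S ≠ T) :
    Disjoint ((univ : Finset (Equiv.Perm (Fin n))).filter fun σ => Des σ = S)
      ((univ : Finset (Equiv.Perm (Fin n))).filter fun σ => Des σ = T) := by
  rw [Finset.disjoint_left]
  intro σ h1 h2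
  rw [Finset.mem_filter] at h1 h2
  exact hST (h1.2 ▸ h2.2 ▸ rfl)

lemma neq_single {d : ℕ} (hd1 : 1 ≤ d) (hdn : d < n) :
    Neq n {d} + 1 = n.choose d := by
  have hdd : ({d, d} : Finset ℕ) = {d} := by simp
  have hsub : ((univ : Finset (Equiv.Perm (Fin n))).filter fun σ => Des σ ⊆ ({d} : Finset ℕ)).card
      = n.choose d := by
    have := filter_des_subset_card d d le_rfl (le_of_lt hdn)
    rw [hdd] at this
    simpa using this
  have hsplit : ((univ : Finset (Equiv.Perm (Fin n))).filter fun σ => Des σ ⊆ ({d} : Finset ℕ))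
      = ((univ : Finset (Equiv.Perm (Fin n))).filter fun σ => Des σ = {d})
        ∪ ((univ : Finset (Equiv.Perm (Fin n))).filter fun σ => Des σ = ∅) := by
    rw [← Finset.filter_or]
    apply Finset.filter_congr
    intro σ _
    rw [Finset.subset_singleton_iff]
    simp [or_comm]
  rw [hsplit, Finset.card_union_of_disjoint (hdisj_filter _ _ (by simp))] at hsub
  have he : ((univ : Finset (Equiv.Perm (Fin n))).filter fun σ => Des σ = ∅).card = 1 :=
    neq_empty (n := n)
  rw [← hsub]
  simp only [Neq]
  omega

lemma finset_subset_pair {s : Finset ℕ} {a b : ℕ} :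
    s ⊆ {a, b} ↔ s = ∅ ∨ s = {a} ∨ s = {b} ∨ s = {a, b} := by
  constructor
  · intro h
    by_cases h1 : a ∈ s <;> by_cases h2 : b ∈ s
    · refine Or.inr (Or.inr (Or.inr (Finset.Subset.antisymm h ?_)))
      rw [Finset.insert_subset_iff, Finset.singleton_subset_iff]
      exact ⟨h1, h2⟩
    · refine Or.inr (Or.inl (Finset.Subset.antisymm ?_ (Finset.singleton_subset_iff.2 h1)))
      intro x hx
      have := h hx
      simp at this ⊢
      rcases this with rfl | rfl
      · rfl
      · exact absurd hx h2
    · refine Or.inr (Or.inr (Or.inl (Finset.Subset.antisymm ?_ (Finset.singleton_subset_iff.2 h2))))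
      intro x hx
      have := h hx
      simp at this ⊢
      rcases this with rfl | rfl
      · exact absurd hx h1
      · rfl
    · left
      rw [Finset.eq_empty_iff_forall_notMem]
      intro x hx
      have := h hx
      simp at this
      rcases this with rfl | rfl
      · exact h1 hx
      · exact h2 hx
  · rintro (rfl | rfl | rfl | rfl)
    · simp
    · simp
    · intro x hx; simp at hx ⊢; right; exact hx
    · exact Finset.Subset.refl _

lemma neq_pair {d1 d2 : ℕ} (h1 : 1 ≤ d1) (h12 : d1 < d2) (h2n : d2 < n) :
    Neq n {d1, d2} + Neq n {d1} + Neq n {d2} + 1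
      = n.choose d1 * (n - d1).choose (d2 - d1) := by
  have hsub := filter_des_subset_card d1 d2 (le_of_lt h12) (le_of_lt h2n)
  have hsplit : ((univ : Finset (Equiv.Perm (Fin n))).filter fun σ => Des σ ⊆ ({d1, d2} : Finset ℕ))
      = (((univ : Finset (Equiv.Perm (Fin n))).filter fun σ => Des σ = {d1, d2})
        ∪ ((univ : Finset (Equiv.Perm (Fin n))).filter fun σ => Des σ = {d1}))
        ∪ (((univ : Finset (Equiv.Perm (Fin n))).filter fun σ => Des σ = {d2})
        ∪ ((univ : Finset (Equiv.Perm (Fin n))).filter fun σ => Des σ = ∅)) := by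
    rw [← Finset.filter_or, ← Finset.filter_or, ← Finset.filter_or]
    apply Finset.filter_congr
    intro σ _
    rw [finset_subset_pair]
    tauto
  have ne1 : ({d1, d2} : Finset ℕ) ≠ {d1} := by
    intro h
    have : d2 ∈ ({d1} : Finset ℕ) := h ▸ (by simp)
    simp at this; omega
  have ne2 : ({d1, d2} : Finset ℕ) ≠ {d2} := by
    intro h
    have : d1 ∈ ({d2} : Finset ℕ) := h ▸ (by simp)
    simp at this; omega
  have ne3 : ({d1, d2} : Finset ℕ) ≠ ∅ := by
    intro h
    have : d1 ∈ (∅ : Finset ℕ) := h ▸ (by simp)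
    simp at this
  have ne4 : ({d1} : Finset ℕ) ≠ ({d2} : Finset ℕ) := by
    intro h
    rw [Finset.singleton_inj] at h; omega
  have ne5 : ({d1} : Finset ℕ) ≠ ∅ := Finset.singleton_ne_empty _
  have ne6 : ({d2} : Finset ℕ) ≠ ∅ := Finset.singleton_ne_empty _
  rw [hsplit, Finset.card_union_of_disjoint, Finset.card_union_of_disjoint (hdisj_filter _ _ ne1),
    Finset.card_union_of_disjoint (hdisj_filter _ _ ne6)] at hsub
  · have he : ((univ : Finset (Equiv.Perm (Fin n))).filter fun σ => Des σ = ∅).card = 1 :=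
      neq_empty (n := n)
    rw [← hsub]
    simp only [Neq]
    omega
  · rw [Finset.disjoint_union_left, Finset.disjoint_union_right, Finset.disjoint_union_right]
    exact ⟨⟨hdisj_filter _ _ ne2, hdisj_filter _ _ ne3⟩,
      ⟨hdisj_filter _ _ ne4, hdisj_filter _ _ ne5⟩⟩

def Ppairs (n : ℕ) : Finset (ℕ × ℕ) :=
  (Finset.Ico 1 n ×ˢ Finset.Ico 1 n).filter fun p => p.1 < p.2

lemma pair_eq_ordered {a b c d : ℕ} (h : ({a, b} : Finset ℕ) = {c, d})
    (hab : a < b) (hcd : c < d) : a = c ∧ b = d := by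
  have h1 : a ∈ ({c, d} : Finset ℕ) := h ▸ (by simp)
  have h2 : b ∈ ({c, d} : Finset ℕ) := h ▸ (by simp)
  have h3 : c ∈ ({a, b} : Finset ℕ) := h ▸ (by simp)
  have h4 : d ∈ ({a, b} : Finset ℕ) := h ▸ (by simp)
  simp at h1 h2 h3 h4
  omega

lemma partition3 :
    ((univ : Finset (Equiv.Perm (Fin n))).filter fun σ => (Des σ).card ≤ 2).card
      = Neq n ∅ + (∑ d ∈ Finset.Ico 1 n, Neq n {d}) + ∑ p ∈ Ppairs n, Neq n {p.1, p.2} := by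
  have hsplit : ((univ : Finset (Equiv.Perm (Fin n))).filter fun σ => (Des σ).card ≤ 2)
      = (((univ : Finset (Equiv.Perm (Fin n))).filter fun σ => (Des σ).card = 0)
        ∪ ((univ : Finset (Equiv.Perm (Fin n))).filter fun σ => (Des σ).card = 1))
        ∪ ((univ : Finset (Equiv.Perm (Fin n))).filter fun σ => (Des σ).card = 2) := by
    rw [← Finset.filter_or, ← Finset.filter_or]
    apply Finset.filter_congr
    intro σ _
    constructor
    · intro h; omega
    · intro h; omega
  have hd2 : ∀ a b : ℕ, a ≠ b →
      Disjoint ((univ : Finset (Equiv.Perm (Fin n))).filter fun σ => (Des σ).card = a)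
        ((univ : Finset (Equiv.Perm (Fin n))).filter fun σ => (Des σ).card = b) := by
    intro a b hab
    rw [Finset.disjoint_left]
    intro σ hσ1 hσ2
    rw [Finset.mem_filter] at hσ1 hσ2
    omega
  have c0 : ((univ : Finset (Equiv.Perm (Fin n))).filter fun σ => (Des σ).card = 0).card
      = Neq n ∅ := by
    rw [Neq]
    congr 1
    apply Finset.filter_congr
    intro σ _
    exact Finset.card_eq_zero
  have c1 : ((univ : Finset (Equiv.Perm (Fin n))).filter fun σ => (Des σ).card = 1).card
      = ∑ d ∈ Finset.Ico 1 n, Neq n {d} := by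
    have hb : ((univ : Finset (Equiv.Perm (Fin n))).filter fun σ => (Des σ).card = 1)
        = (Finset.Ico 1 n).biUnion
            (fun d => (univ : Finset (Equiv.Perm (Fin n))).filter fun σ => Des σ = {d}) := by
      ext σ
      simp only [Finset.mem_filter, Finset.mem_biUnion, Finset.mem_univ, true_and]
      constructor
      · intro h
        obtain ⟨d, hd⟩ := Finset.card_eq_one.1 h
        have hdm : d ∈ Des σ := hd ▸ Finset.mem_singleton_self d
        have := mem_Des.1 hdm
        exact ⟨d, Finset.mem_Ico.2 ⟨this.1.1, this.1.2⟩, hd⟩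
      · rintro ⟨d, _, hd⟩
        rw [hd, Finset.card_singleton]
    rw [hb, Finset.card_biUnion]
    · simp only [Neq]
    · intro d _ e _ hde
      exact hdisj_filter _ _ (fun h => hde (Finset.singleton_inj.1 h))
  have c2 : ((univ : Finset (Equiv.Perm (Fin n))).filter fun σ => (Des σ).card = 2).card
      = ∑ p ∈ Ppairs n, Neq n {p.1, p.2} := by
    have hb : ((univ : Finset (Equiv.Perm (Fin n))).filter fun σ => (Des σ).card = 2)
        = (Ppairs n).biUnion
            (fun p => (univ : Finset (Equiv.Perm (Fin n))).filter
              fun σ => Des σ = {p.1, p.2}) := by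
      ext σ
      simp only [Finset.mem_filter, Finset.mem_biUnion, Finset.mem_univ, true_and]
      constructor
      · intro h
        obtain ⟨x, y, hxy, hd⟩ := Finset.card_eq_two.1 h
        have hxm : x ∈ Des σ := hd ▸ (by simp)
        have hym : y ∈ Des σ := hd ▸ (by simp)
        have hx := mem_Des.1 hxm
        have hy := mem_Des.1 hym
        rcases Nat.lt_or_ge x y with hlt | hge
        · refine ⟨(x, y), ?_, hd⟩
          rw [Ppairs, Finset.mem_filter, Finset.mem_product]
          exact ⟨⟨Finset.mem_Ico.2 ⟨hx.1.1, hx.1.2⟩, Finset.mem_Ico.2 ⟨hy.1.1, hy.1.2⟩⟩, hlt⟩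
        · refine ⟨(y, x), ?_, hd.trans (Finset.pair_comm x y)⟩
          rw [Ppairs, Finset.mem_filter, Finset.mem_product]
          exact ⟨⟨Finset.mem_Ico.2 ⟨hy.1.1, hy.1.2⟩, Finset.mem_Ico.2 ⟨hx.1.1, hx.1.2⟩⟩,
            by omega⟩
      · rintro ⟨p, hp, hd⟩
        rw [Ppairs, Finset.mem_filter] at hp
        rw [hd, Finset.card_insert_of_notMem (by simp; omega), Finset.card_singleton]
    rw [hb, Finset.card_biUnion]
    · simp only [Neq]
    · intro p hp q hq hpq
      rw [Ppairs, Finset.mem_coe, Finset.mem_filter] at hp hq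
      apply hdisj_filter
      intro h
      obtain ⟨h1, h2⟩ := pair_eq_ordered h hp.2 hq.2
      exact hpq (Prod.ext h1 h2)
  rw [hsplit, Finset.card_union_of_disjoint, Finset.card_union_of_disjoint (hd2 0 1 (by omega)),
    c0, c1, c2]
  rw [Finset.disjoint_union_left]
  exact ⟨hd2 0 2 (by omega), hd2 1 2 (by omega)⟩

lemma sum_choose_Ico (m : ℕ) (hm : 1 ≤ m) :
    (∑ d ∈ Finset.Ico 1 m, (m.choose d : ℚ)) = 2 ^ m - 2 := by
  have h : (∑ d ∈ Finset.range (m + 1), (m.choose d : ℚ)) = 2 ^ m := by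
    have := Nat.sum_range_choose m
    exact_mod_cast this
  rw [Finset.range_eq_Ico,
    ← Finset.sum_Ico_consecutive _ (by omega : (0:ℕ) ≤ 1) (by omega : 1 ≤ m + 1),
    ← Finset.sum_Ico_consecutive _ (by omega : (1:ℕ) ≤ m) (by omega : m ≤ m + 1)] at h
  rw [show Finset.Ico 0 1 = {0} from rfl, show Finset.Ico m (m+1) = {m} from Nat.Ico_succ_singleton m]
    at h
  simp only [Finset.sum_singleton, Nat.choose_zero_right, Nat.choose_self, Nat.cast_one] at h
  linarith

lemma sum_choose_pow_Ico (m : ℕ) (hm : 1 ≤ m) :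
    (∑ d ∈ Finset.Ico 1 m, (m.choose d : ℚ) * 2 ^ (m - d)) = 3 ^ m - 2 ^ m - 1 := by
  have h : (∑ d ∈ Finset.range (m + 1), (m.choose d : ℚ) * 2 ^ (m - d)) = 3 ^ m := by
    have := add_pow (1 : ℚ) 2 m
    simp only [one_pow, one_mul] at this
    norm_num at this
    rw [this]
    apply Finset.sum_congr rfl
    intro k _
    ring
  rw [Finset.range_eq_Ico,
    ← Finset.sum_Ico_consecutive _ (by omega : (0:ℕ) ≤ 1) (by omega : 1 ≤ m + 1),
    ← Finset.sum_Ico_consecutive _ (by omega : (1:ℕ) ≤ m) (by omega : m ≤ m + 1)] at h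
  rw [show Finset.Ico 0 1 = {0} from rfl, show Finset.Ico m (m+1) = {m} from Nat.Ico_succ_singleton m]
    at h
  simp only [Finset.sum_singleton, Nat.choose_zero_right, Nat.choose_self, Nat.cast_one,
    Nat.sub_zero, Nat.sub_self, pow_zero] at h
  linarith

lemma gauss_Ico (m : ℕ) :
    (∑ d ∈ Finset.Ico 1 m, ((m - d - 1 : ℕ) : ℚ)) = ((m-1) * (m-2) / 2 : ℕ) := by
  have h1 : (∑ d ∈ Finset.Ico 1 m, (m - d - 1)) = (m-1) * (m-2) / 2 := by
    rw [Finset.sum_Ico_eq_sum_range]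
    have h2 : ∀ k ∈ Finset.range (m - 1), m - (1 + k) - 1 = (m - 1) - 1 - k := by
      intro k _; omega
    rw [Finset.sum_congr rfl h2, Finset.sum_range_reflect (fun k => k) (m - 1)]
    have h3 := Finset.sum_range_id_mul_two (m - 1)
    have h4 : (m - 1) * (m - 1 - 1) = (m - 1) * (m - 2) := by
      congr 1 <;> omega
    rw [h4] at h3
    omega
  rw [← h1]
  push_cast
  rfl

lemma sum_Ppairs (f : ℕ → ℕ → ℚ) :
    (∑ p ∈ Ppairs n, f p.1 p.2) = ∑ d1 ∈ Finset.Ico 1 n, ∑ d2 ∈ Finset.Ioo d1 n, f d1 d2 := by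
  rw [Ppairs, Finset.sum_filter, Finset.sum_product]
  apply Finset.sum_congr rfl
  intro d1 hd1
  rw [Finset.mem_Ico] at hd1
  rw [← Finset.sum_filter]
  apply Finset.sum_congr _ (fun _ _ => rfl)
  ext x
  simp only [Finset.mem_filter, Finset.mem_Ico, Finset.mem_Ioo]
  omega

lemma sum_Ppairs2 (f : ℕ → ℚ) :
    (∑ p ∈ Ppairs n, f p.2) = ∑ d2 ∈ Finset.Ico 1 n, ((d2 - 1 : ℕ) : ℚ) * f d2 := by
  rw [Ppairs, Finset.sum_filter, Finset.sum_product]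
  rw [Finset.sum_comm]
  apply Finset.sum_congr rfl
  intro d2 hd2
  rw [Finset.mem_Ico] at hd2
  rw [← Finset.sum_filter]
  have he : (Finset.Ico 1 n).filter (fun d1 => d1 < d2) = Finset.Ico 1 d2 := by
    ext x
    simp only [Finset.mem_filter, Finset.mem_Ico]
    omega
  have hr : (∑ a ∈ Finset.Ico 1 d2, f (a, d2).2) = ∑ _a ∈ Finset.Ico 1 d2, f d2 := rfl
  rw [he, hr, Finset.sum_const, Nat.card_Ico, nsmul_eq_mul]

lemma cast_half (X : ℕ) (hX : Even X) : ((X / 2 : ℕ) : ℚ) = (X : ℚ) / 2 := by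
  obtain ⟨k, hk⟩ := hX
  subst hk
  have : (k + k) / 2 = k := by omega
  rw [this]
  push_cast
  ring

lemma count_formula (hn : 2 ≤ n) :
    (((univ : Finset (Equiv.Perm (Fin n))).filter fun σ => (Des σ).card ≤ 2).card : ℚ)
      = 3 ^ n - n * 2 ^ n + n * (n - 1) / 2 := by
  have h1 : ((Neq n ∅ : ℕ) : ℚ) = 1 := by rw [neq_empty]; norm_num
  have h2 : (∑ d ∈ Finset.Ico 1 n, (Neq n {d} : ℚ)) = (2 ^ n - 2) - ((n : ℚ) - 1) := by
    have hterm : ∀ d ∈ Finset.Ico 1 n, (Neq n {d} : ℚ) = (n.choose d : ℚ) - 1 := by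
      intro d hd
      rw [Finset.mem_Ico] at hd
      have hs := neq_single (n := n) hd.1 hd.2
      have hs' : (Neq n {d} : ℚ) + 1 = (n.choose d : ℚ) := by exact_mod_cast hs
      linarith
    rw [Finset.sum_congr rfl hterm, Finset.sum_sub_distrib, sum_choose_Ico n (by omega),
      Finset.sum_const, Nat.card_Ico, nsmul_eq_mul, mul_one]
    have : ((n - 1 : ℕ) : ℚ) = (n : ℚ) - 1 := by
      push_cast [Nat.cast_sub (by omega : 1 ≤ n)]
      ring
    rw [this]
  -- T1
  have T1 : (∑ p ∈ Ppairs n, (n.choose p.1 : ℚ) * ((n - p.1).choose (p.2 - p.1) : ℚ))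
      = 3 ^ n - 3 * 2 ^ n + 3 := by
    rw [sum_Ppairs (f := fun d1 d2 => (n.choose d1 : ℚ) * ((n - d1).choose (d2 - d1) : ℚ))]
    have hinner : ∀ d1 ∈ Finset.Ico 1 n,
        (∑ d2 ∈ Finset.Ioo d1 n, (n.choose d1 : ℚ) * ((n - d1).choose (d2 - d1) : ℚ))
          = (n.choose d1 : ℚ) * (2 ^ (n - d1) - 2) := by
      intro d1 hd1
      rw [Finset.mem_Ico] at hd1
      rw [← Finset.mul_sum]
      congr 1
      have hs := sum_choose_Ico (n - d1) (by omega)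
      rw [Finset.sum_Ico_eq_sum_range] at hs
      rw [← Finset.Ico_add_one_left_eq_Ioo, Finset.sum_Ico_eq_sum_range]
      rw [← hs]
      apply Finset.sum_congr
      · congr 1
      · intro k _
        have he : d1 + 1 + k - d1 = 1 + k := by omega
        rw [he]
    rw [Finset.sum_congr rfl hinner]
    have hexp : ∀ d ∈ Finset.Ico 1 n, (n.choose d : ℚ) * (2 ^ (n - d) - 2)
        = (n.choose d : ℚ) * 2 ^ (n - d) - 2 * (n.choose d : ℚ) := by
      intro d _; ring
    rw [Finset.sum_congr rfl hexp, Finset.sum_sub_distrib, sum_choose_pow_Ico n (by omega),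
      ← Finset.mul_sum, sum_choose_Ico n (by omega)]
    ring
  -- T2
  have T2 : (∑ p ∈ Ppairs n, (n.choose p.1 : ℚ))
      = ∑ d ∈ Finset.Ico 1 n, ((n - d - 1 : ℕ) : ℚ) * (n.choose d : ℚ) := by
    rw [sum_Ppairs (f := fun d1 _ => (n.choose d1 : ℚ))]
    apply Finset.sum_congr rfl
    intro d _
    rw [Finset.sum_const, Nat.card_Ioo, nsmul_eq_mul]
  have T3 : (∑ p ∈ Ppairs n, (n.choose p.2 : ℚ))
      = ∑ d ∈ Finset.Ico 1 n, ((d - 1 : ℕ) : ℚ) * (n.choose d : ℚ) :=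
    sum_Ppairs2 (f := fun d => (n.choose d : ℚ))
  have T23 : (∑ p ∈ Ppairs n, (n.choose p.1 : ℚ)) + (∑ p ∈ Ppairs n, (n.choose p.2 : ℚ))
      = ((n : ℚ) - 2) * (2 ^ n - 2) := by
    rw [T2, T3, ← Finset.sum_add_distrib]
    have hterm : ∀ d ∈ Finset.Ico 1 n,
        ((n - d - 1 : ℕ) : ℚ) * (n.choose d : ℚ) + ((d - 1 : ℕ) : ℚ) * (n.choose d : ℚ)
          = ((n : ℚ) - 2) * (n.choose d : ℚ) := by
      intro d hd
      rw [Finset.mem_Ico] at hd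
      have c1 : ((n - d - 1 : ℕ) : ℚ) = (n : ℚ) - d - 1 := by
        rw [Nat.cast_sub (by omega : 1 ≤ n - d), Nat.cast_sub (by omega : d ≤ n)]
        push_cast
        ring
      have c2 : ((d - 1 : ℕ) : ℚ) = (d : ℚ) - 1 := by
        push_cast [Nat.cast_sub (by omega : 1 ≤ d)]
        ring
      rw [c1, c2]
      ring
    rw [Finset.sum_congr rfl hterm, ← Finset.mul_sum, sum_choose_Ico n (by omega)]
  -- T4
  have T4 : (∑ _p ∈ Ppairs n, (1 : ℚ)) = ((n : ℚ) - 1) * ((n : ℚ) - 2) / 2 := by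
    rw [sum_Ppairs (f := fun _ _ => (1 : ℚ))]
    have hterm : ∀ d ∈ Finset.Ico 1 n,
        (∑ _d2 ∈ Finset.Ioo d n, (1 : ℚ)) = ((n - d - 1 : ℕ) : ℚ) := by
      intro d _
      rw [Finset.sum_const, Nat.card_Ioo, nsmul_eq_mul, mul_one]
    rw [Finset.sum_congr rfl hterm, gauss_Ico n]
    have heven : Even ((n - 1) * (n - 2)) := by
      rcases Nat.even_or_odd (n - 1) with h | h
      · exact h.mul_right _
      · have : Even (n - 2) := by
          rcases Nat.even_or_odd (n - 2) with h2 | h2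
          · exact h2
          · exfalso
            obtain ⟨a, ha⟩ := h
            obtain ⟨b, hb⟩ := h2
            omega
        exact this.mul_left _
    rw [cast_half _ heven]
    push_cast [Nat.cast_sub (by omega : 1 ≤ n), Nat.cast_sub (by omega : 2 ≤ n)]
    ring
  -- h3
  have h3 : (∑ p ∈ Ppairs n, (Neq n {p.1, p.2} : ℚ))
      = (3 ^ n - 3 * 2 ^ n + 3) - ((n : ℚ) - 2) * (2 ^ n - 2)
        + ((n : ℚ) - 1) * ((n : ℚ) - 2) / 2 := by
    have hterm : ∀ p ∈ Ppairs n, (Neq n {p.1, p.2} : ℚ)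
        = (n.choose p.1 : ℚ) * ((n - p.1).choose (p.2 - p.1) : ℚ)
          - (n.choose p.1 : ℚ) - (n.choose p.2 : ℚ) + 1 := by
      intro p hp
      rw [Ppairs, Finset.mem_filter, Finset.mem_product, Finset.mem_Ico, Finset.mem_Ico] at hp
      obtain ⟨⟨⟨hp11, hp12⟩, hp21, hp22⟩, hplt⟩ := hp
      have e2 := neq_pair (n := n) hp11 hplt hp22
      have s1 := neq_single (n := n) hp11 hp12
      have s2 := neq_single (n := n) hp21 hp22
      have e2' : (Neq n {p.1, p.2} : ℚ) + (Neq n {p.1} : ℚ) + (Neq n {p.2} : ℚ) + 1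
          = (n.choose p.1 : ℚ) * ((n - p.1).choose (p.2 - p.1) : ℚ) := by exact_mod_cast e2
      have s1' : (Neq n {p.1} : ℚ) + 1 = (n.choose p.1 : ℚ) := by exact_mod_cast s1
      have s2' : (Neq n {p.2} : ℚ) + 1 = (n.choose p.2 : ℚ) := by exact_mod_cast s2
      linarith
    rw [Finset.sum_congr rfl hterm, Finset.sum_add_distrib, Finset.sum_sub_distrib,
      Finset.sum_sub_distrib, T1]
    linarith [T23, T4]
  -- assemble
  have hp3 := partition3 (n := n)
  have hp3' : (((univ : Finset (Equiv.Perm (Fin n))).filter fun σ => (Des σ).card ≤ 2).card : ℚ)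
      = ((Neq n ∅ : ℕ) : ℚ) + (∑ d ∈ Finset.Ico 1 n, (Neq n {d} : ℚ))
        + (∑ p ∈ Ppairs n, (Neq n {p.1, p.2} : ℚ)) := by
    rw [hp3]
    push_cast
    ring
  rw [hp3', h1, h2, h3]
  ring


-- ===== bridge =====

lemma p21_card : p21.1 = 2 := rfl

lemma p21_val (x : Fin p21.1) : ((p21.2 x : Fin p21.1) : ℕ) = 1 - (x : ℕ) := by
  rcases x with ⟨v, hv⟩
  have hv2 : v < 2 := hv
  interval_cases v <;> rfl

/-- the identity pattern of any length avoids 21 -/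
lemma id_mem_Av (m : ℕ) : (⟨m, Equiv.refl (Fin m)⟩ : Perm') ∈ Av {p21} := by
  intro τ hτ
  rw [Set.mem_singleton_iff] at hτ
  subst hτ
  rintro ⟨f, hmono, hiff⟩
  set x0 : Fin p21.1 := ⟨0, Nat.zero_lt_two⟩ with hx0
  set x1 : Fin p21.1 := ⟨1, Nat.one_lt_two⟩ with hx1
  have h10 : p21.2 x1 < p21.2 x0 := by
    rw [Fin.lt_def, p21_val, p21_val, hx0, hx1]
    simp
  have := (hiff x1 x0).1 h10
  simp only [Equiv.refl_apply] at this
  have hm := hmono (show x0 < x1 by rw [hx0, hx1]; exact Fin.lt_def.2 Nat.zero_lt_one)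
  exact absurd hm (not_lt.2 (le_of_lt this))

/-- a descending pair gives containment of 21 -/
lemma contains_p21 (σ : Perm') (ii jj : Fin σ.1) (hij : ii < jj)
    (hdes : σ.2 jj < σ.2 ii) : Contains σ p21 := by
  refine ⟨fun x => if (x : ℕ) = 0 then ii else jj, ?_, ?_⟩
  · intro x y hxy
    have hx2 : (x : ℕ) < 2 := x.2
    have hy2 : (y : ℕ) < 2 := y.2
    rw [Fin.lt_def] at hxy
    have hx0 : (x : ℕ) = 0 := by omega
    have hy1 : (y : ℕ) = 1 := by omega
    simp only [hx0, hy1, if_pos, if_neg]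
    simpa using hij
  · intro x y
    have hx2 : (x : ℕ) < 2 := x.2
    have hy2 : (y : ℕ) < 2 := y.2
    rw [Fin.lt_def, p21_val, p21_val]
    rcases Nat.eq_zero_or_pos (x : ℕ) with hx | hx <;>
      rcases Nat.eq_zero_or_pos (y : ℕ) with hy | hy
    · simp only [hx, hy, if_pos]
      constructor
      · intro h; omega
      · intro h; exact absurd h (lt_irrefl _)
    · have hy1 : (y : ℕ) = 1 := by omega
      simp only [hx, hy1, if_pos, if_neg (by omega : ¬ (1 : ℕ) = 0)]
      constructor
      · intro h; omega
      · intro h; exact absurd hdes (not_lt.2 (le_of_lt h))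
    · have hx1 : (x : ℕ) = 1 := by omega
      simp only [hx1, hy, if_pos, if_neg (by omega : ¬ (1 : ℕ) = 0)]
      constructor
      · intro _; exact hdes
      · intro _; omega
    · have hx1 : (x : ℕ) = 1 := by omega
      have hy1 : (y : ℕ) = 1 := by omega
      simp only [hx1, hy1, if_neg (by omega : ¬ (1 : ℕ) = 0)]
      constructor
      · intro h; omega
      · intro h; exact absurd h (lt_irrefl _)

def WIncr (π : Perm') (a b : ℕ) : Prop :=
  ∀ (p q : ℕ) (hp : p < π.1) (hq : q < π.1), a ≤ p → p < q → q < b →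
    π.2 ⟨p, hp⟩ < π.2 ⟨q, hq⟩

lemma patternIn_iff (π : Perm') (a b : ℕ) :
    PatternIn π a b (Av {p21} ∪ emptyPerms) ↔ (b ≤ π.1 ∧ WIncr π a b) := by
  constructor
  · rintro ⟨σ, ⟨hb, hσ1, hiff⟩, hmem⟩
    refine ⟨hb, ?_⟩
    intro p q hp hq hap hpq hqb
    have hlen : 2 ≤ σ.1 := by omega
    set ii : Fin σ.1 := ⟨p - a, by omega⟩ with hii
    set jj : Fin σ.1 := ⟨q - a, by omega⟩ with hjj
    have hij : ii < jj := by
      rw [hii, hjj, Fin.mk_lt_mk]; omega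
    have hidx1 : (⟨a + (ii : ℕ), by omega⟩ : Fin π.1) = ⟨p, hp⟩ := by
      apply Fin.ext; simp [hii]; omega
    have hidx2 : (⟨a + (jj : ℕ), by omega⟩ : Fin π.1) = ⟨q, hq⟩ := by
      apply Fin.ext; simp [hjj]; omega
    rcases lt_trichotomy (σ.2 ii) (σ.2 jj) with hc | hc | hc
    · have := (hiff ii jj).1 hc
      rwa [hidx1, hidx2] at this
    · exact absurd (σ.2.injective hc) (by intro h; rw [h] at hij; exact lt_irrefl _ hij)
    · exfalso
      rcases hmem with hmem | hmem
      · exact hmem p21 (Set.mem_singleton _) (contains_p21 σ ii jj hij hc)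
      · have : σ.1 = 0 := hmem
        omega
  · rintro ⟨hb, hinc⟩
    refine ⟨⟨b - a, Equiv.refl (Fin (b - a))⟩, ⟨hb, rfl, ?_⟩, ?_⟩
    · intro ii jj
      have hii' : (ii : ℕ) < b - a := ii.2
      have hjj' : (jj : ℕ) < b - a := jj.2
      simp only [Equiv.refl_apply]
      constructor
      · intro hij
        exact hinc (a + ii) (a + jj) (by omega) (by omega) (by omega)
          (by rw [Fin.lt_def] at hij; omega) (by omega)
      · intro h
        rcases lt_trichotomy ii jj with hc | hc | hc
        · exact hc
        · exfalso; rw [hc] at h; exact lt_irrefl _ h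
        · exfalso
          have := hinc (a + jj) (a + ii) (by omega) (by omega) (by omega)
            (by rw [Fin.lt_def] at hc; omega) (by omega)
          exact absurd h (not_lt.2 (le_of_lt this))
    · exact Or.inl (id_mem_Av (b - a))

lemma mem_grid_iff (π : Perm') :
    π ∈ GridClass ![Av {p21}, Av {p21}, Av {p21}] ↔
      ∃ i j : ℕ, i ≤ j ∧ j ≤ π.1 ∧ WIncr π 0 i ∧ WIncr π i j ∧ WIncr π j π.1 := by
  constructor
  · rintro ⟨ix, hmono, h0, hlast, hcond⟩
    have hl : ix 3 = π.1 := by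
      have he : Fin.last 3 = (3 : Fin 4) := rfl
      rw [← he]; exact hlast
    have h01 := hcond 0
    have h12 := hcond 1
    have h23 := hcond 2
    rw [show ((0 : Fin 3).castSucc) = (0 : Fin 4) from rfl,
      show ((0 : Fin 3).succ) = (1 : Fin 4) from rfl,
      show (![Av {p21}, Av {p21}, Av {p21}] (0 : Fin 3)) = Av {p21} from rfl,
      patternIn_iff, h0] at h01
    rw [show ((1 : Fin 3).castSucc) = (1 : Fin 4) from rfl,
      show ((1 : Fin 3).succ) = (2 : Fin 4) from rfl,
      show (![Av {p21}, Av {p21}, Av {p21}] (1 : Fin 3)) = Av {p21} from rfl,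
      patternIn_iff] at h12
    rw [show ((2 : Fin 3).castSucc) = (2 : Fin 4) from rfl,
      show ((2 : Fin 3).succ) = (3 : Fin 4) from rfl,
      show (![Av {p21}, Av {p21}, Av {p21}] (2 : Fin 3)) = Av {p21} from rfl,
      patternIn_iff, hl] at h23
    exact ⟨ix 1, ix 2, hmono (by decide : (1 : Fin 4) ≤ 2), hl ▸ hmono (by decide : (2 : Fin 4) ≤ 3), h01.2, h12.2, h23.2⟩
  · rintro ⟨i, j, hij, hjn, h1, h2, h3⟩
    refine ⟨![0, i, j, π.1], ?_, rfl, rfl, ?_⟩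
    · intro x y hxy
      rw [Fin.le_def] at hxy
      fin_cases x <;> fin_cases y <;>
        simp only [Fin.isValue, Matrix.cons_val_zero, Matrix.cons_val_one, Matrix.head_cons,
          Fin.val_zero, Fin.val_one, Fin.val_two] at hxy ⊢ <;>
        first
          | exact le_rfl
          | omega
          | (exact Nat.zero_le _)
          | (exact hij)
          | (exact hjn)
          | (exact le_trans hij hjn)
          | skip
    · intro jj
      fin_cases jj
      · show PatternIn π 0 i (Av {p21} ∪ emptyPerms)
        rw [patternIn_iff]
        exact ⟨le_trans hij hjn, h1⟩
      · show PatternIn π i j (Av {p21} ∪ emptyPerms)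
        rw [patternIn_iff]
        exact ⟨hjn, h2⟩
      · show PatternIn π j π.1 (Av {p21} ∪ emptyPerms)
        rw [patternIn_iff]
        exact ⟨le_rfl, h3⟩

lemma wincr_iff_incOn (σ : Equiv.Perm (Fin n)) (a b : ℕ) (hb : b ≤ n) :
    WIncr ⟨n, σ⟩ a b ↔ IncOn σ a b := by
  constructor
  · intro h p q hap hpq hqb hqn
    have := h p q (show p < n by omega) (show q < n from hqn) hap hpq hqb
    rwa [vv_lt_iff (show p < n by omega) hqn]
  · intro h p q hp hq hap hpq hqb
    have := h p q hap hpq hqb hq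
    rwa [vv_lt_iff hp hq] at this

lemma grid_iff_des (σ : Equiv.Perm (Fin n)) :
    (⟨n, σ⟩ : Perm') ∈ GridClass ![Av {p21}, Av {p21}, Av {p21}] ↔ (Des σ).card ≤ 2 := by
  rw [mem_grid_iff, card_des_le_two_iff]
  constructor
  · rintro ⟨i, j, hij, hjn, h1, h2, h3⟩
    exact ⟨i, j, hij, hjn, (wincr_iff_incOn σ 0 i (le_trans hij hjn)).1 h1,
      (wincr_iff_incOn σ i j hjn).1 h2, (wincr_iff_incOn σ j n le_rfl).1 h3⟩
  · rintro ⟨i, j, hij, hjn, h1, h2, h3⟩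
    exact ⟨i, j, hij, hjn, (wincr_iff_incOn σ 0 i (le_trans hij hjn)).2 h1,
      (wincr_iff_incOn σ i j hjn).2 h2, (wincr_iff_incOn σ j n le_rfl).2 h3⟩

noncomputable def aQ (n : ℕ) : ℚ := 3 ^ n - n * 2 ^ n + n * (n - 1) / 2

lemma count_formula_all (m : ℕ) :
    (((univ : Finset (Equiv.Perm (Fin m))).filter fun σ => (Des σ).card ≤ 2).card : ℚ)
      = aQ m := by
  rcases Nat.lt_or_ge m 2 with h | h
  · have hmem : ∀ σ : Equiv.Perm (Fin m), (Des σ).card ≤ 2 := by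
      intro σ
      calc (Des σ).card ≤ (Finset.Ico 1 m).card := Finset.card_filter_le _ _
        _ ≤ 2 := by rw [Nat.card_Ico]; omega
    rw [Finset.filter_true_of_mem (fun σ _ => hmem σ), Finset.card_univ, Fintype.card_perm,
      Fintype.card_fin]
    interval_cases m
    · norm_num [aQ]
    · norm_num [aQ]
  · rw [count_formula h, aQ]

lemma gf_coeff (m : ℕ) :
    ((Set.ncard {π : Perm' | π ∈ GridClass ![Av {p21}, Av {p21}, Av {p21}] ∧ π.1 = m}) : ℚ)
      = aQ m := by
  have hinj : Function.Injective (fun σ : Equiv.Perm (Fin m) => (⟨m, σ⟩ : Perm')) := by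
    intro a b h
    simpa using h
  have hset : {π : Perm' | π ∈ GridClass ![Av {p21}, Av {p21}, Av {p21}] ∧ π.1 = m}
      = (fun σ : Equiv.Perm (Fin m) => (⟨m, σ⟩ : Perm')) '' {σ | (Des σ).card ≤ 2} := by
    ext π
    constructor
    · rintro ⟨hG, h1⟩
      obtain ⟨k, τ⟩ := π
      have hk : k = m := h1
      subst hk
      exact ⟨τ, (grid_iff_des τ).1 hG, rfl⟩
    · rintro ⟨σ, hσ, rfl⟩
      exact ⟨(grid_iff_des σ).2 hσ, rfl⟩
  rw [hset, Set.ncard_image_of_injective _ hinj]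
  rw [Set.ncard_eq_toFinset_card']
  rw [← count_formula_all m]
  congr 1
  simp [Set.toFinset_setOf]

lemma gf_eq : gf (GridClass ![Av {p21}, Av {p21}, Av {p21}]) = PowerSeries.mk aQ := by
  apply PowerSeries.ext
  intro m
  simp only [gf, PowerSeries.coeff_mk]
  exact gf_coeff m

lemma coeff_term (q : ℚ) (k m : ℕ) (f : PowerSeries ℚ) :
    PowerSeries.coeff m (PowerSeries.C q * PowerSeries.X ^ k * f)
      = if k ≤ m then q * PowerSeries.coeff (m - k) f else 0 := by
  rw [mul_assoc, PowerSeries.coeff_C_mul, PowerSeries.coeff_X_pow_mul']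
  split_ifs <;> simp

lemma coeff_term' (q : ℚ) (k m : ℕ) :
    PowerSeries.coeff m (PowerSeries.C q * PowerSeries.X ^ k)
      = if m = k then q else 0 := by
  rw [PowerSeries.coeff_C_mul, PowerSeries.coeff_X_pow]
  split_ifs <;> simp

lemma hpolyL : ((1 : PowerSeries ℚ) - PowerSeries.X) ^ 3 * (1 - 2 * PowerSeries.X) ^ 2
      * (1 - 3 * PowerSeries.X)
    = PowerSeries.C 1 * PowerSeries.X ^ 0 + PowerSeries.C (-10) * PowerSeries.X ^ 1
      + PowerSeries.C 40 * PowerSeries.X ^ 2 + PowerSeries.C (-82) * PowerSeries.X ^ 3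
      + PowerSeries.C 91 * PowerSeries.X ^ 4 + PowerSeries.C (-52) * PowerSeries.X ^ 5
      + PowerSeries.C 12 * PowerSeries.X ^ 6 := by
  simp only [map_neg, map_ofNat, map_one]
  ring

lemma hrhsL : ((1 : PowerSeries ℚ) - PowerSeries.X) ^ 2 * (1 - 2 * PowerSeries.X) ^ 2
      * (1 - 3 * PowerSeries.X)
    + PowerSeries.X ^ 2 * (1 - PowerSeries.X) * (1 - 2 * PowerSeries.X)
      * (1 - 3 * PowerSeries.X)
    + PowerSeries.X ^ 3 * (1 + PowerSeries.X - 4 * PowerSeries.X ^ 2)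
    = PowerSeries.C 1 * PowerSeries.X ^ 0 + PowerSeries.C (-9) * PowerSeries.X ^ 1
      + PowerSeries.C 32 * PowerSeries.X ^ 2 + PowerSeries.C (-56) * PowerSeries.X ^ 3
      + PowerSeries.C 52 * PowerSeries.X ^ 4 + PowerSeries.C (-22) * PowerSeries.X ^ 5 := by
  simp only [map_neg, map_ofNat, map_one]
  ring

lemma key_identity :
    (1 - PowerSeries.X) ^ 3 * (1 - 2 * PowerSeries.X) ^ 2 * (1 - 3 * PowerSeries.X)
        * PowerSeries.mk aQ =
      (1 - PowerSeries.X) ^ 2 * (1 - 2 * PowerSeries.X) ^ 2 * (1 - 3 * PowerSeries.X) +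
        PowerSeries.X ^ 2 * (1 - PowerSeries.X) * (1 - 2 * PowerSeries.X) *
          (1 - 3 * PowerSeries.X) +
        PowerSeries.X ^ 3 * (1 + PowerSeries.X - 4 * PowerSeries.X ^ 2) := by
  rw [hpolyL, hrhsL]
  apply PowerSeries.ext
  intro m
  simp only [add_mul, map_add, coeff_term, coeff_term', PowerSeries.coeff_mk]
  rcases Nat.lt_or_ge m 6 with h | h
  · interval_cases m <;> norm_num [aQ]
  · obtain ⟨t, rfl⟩ : ∃ t, m = t + 6 := ⟨m - 6, by omega⟩
    rw [if_pos (Nat.zero_le _), if_pos (by omega : 1 ≤ t + 6), if_pos (by omega : 2 ≤ t + 6),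
      if_pos (by omega : 3 ≤ t + 6), if_pos (by omega : 4 ≤ t + 6),
      if_pos (by omega : 5 ≤ t + 6), if_pos (by omega : 6 ≤ t + 6),
      if_neg (by omega : ¬ t + 6 = 0), if_neg (by omega : ¬ t + 6 = 1),
      if_neg (by omega : ¬ t + 6 = 2), if_neg (by omega : ¬ t + 6 = 3),
      if_neg (by omega : ¬ t + 6 = 4), if_neg (by omega : ¬ t + 6 = 5)]
    rw [show t + 6 - 0 = t + 6 from rfl, show t + 6 - 1 = t + 5 by omega,
      show t + 6 - 2 = t + 4 by omega, show t + 6 - 3 = t + 3 by omega,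
      show t + 6 - 4 = t + 2 by omega, show t + 6 - 5 = t + 1 by omega,
      show t + 6 - 6 = t by omega]
    simp only [aQ]
    push_cast
    ring


/-- the generating function `F` of `Av(21) | Av(21) | Av(21)` satisfies
`(1−z)³(1−2z)²(1−3z)·F = (1−z)²(1−2z)²(1−3z) + z²(1−z)(1−2z)(1−3z) + z³(1+z−4z²)`;
in particular `F` is rational. -/
theorem stmt13 (F : PowerSeries ℚ)
    (hF : F = gf (GridClass ![Av {p21}, Av {p21}, Av {p21}])) :
    (1 - PowerSeries.X) ^ 3 * (1 - 2 * PowerSeries.X) ^ 2 *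
        (1 - 3 * PowerSeries.X) * F =
      (1 - PowerSeries.X) ^ 2 * (1 - 2 * PowerSeries.X) ^ 2 *
          (1 - 3 * PowerSeries.X) +
        PowerSeries.X ^ 2 * (1 - PowerSeries.X) * (1 - 2 * PowerSeries.X) *
          (1 - 3 * PowerSeries.X) +
        PowerSeries.X ^ 3 *
          (1 + PowerSeries.X - 4 * PowerSeries.X ^ 2) ∧
    IsRationalPS F := by
  have hFmk : F = PowerSeries.mk aQ := by rw [hF, gf_eq]
  constructor
  · rw [hFmk]
    exact key_identity
  · refine ⟨Polynomial.C (1 : ℚ) * Polynomial.X ^ 0 + Polynomial.C (-9) * Polynomial.X ^ 1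
      + Polynomial.C 32 * Polynomial.X ^ 2 + Polynomial.C (-56) * Polynomial.X ^ 3
      + Polynomial.C 52 * Polynomial.X ^ 4 + Polynomial.C (-22) * Polynomial.X ^ 5,
      Polynomial.C (1 : ℚ) * Polynomial.X ^ 0 + Polynomial.C (-10) * Polynomial.X ^ 1
      + Polynomial.C 40 * Polynomial.X ^ 2 + Polynomial.C (-82) * Polynomial.X ^ 3
      + Polynomial.C 91 * Polynomial.X ^ 4 + Polynomial.C (-52) * Polynomial.X ^ 5
      + Polynomial.C 12 * Polynomial.X ^ 6, ?_, ?_⟩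
    · simp [Polynomial.coeff_add, Polynomial.coeff_C_mul, Polynomial.coeff_X_pow]
    · rw [hFmk]
      push_cast [Polynomial.coe_add, Polynomial.coe_mul, Polynomial.coe_pow,
        Polynomial.coe_C, Polynomial.coe_X]
      rw [← hpolyL, ← hrhsL]
      exact key_identity
end
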